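/- Burkholder's inequality with explicit constant: Let q > 1 and q′ = min(q, 2), and set K_q = max( (q−1)^{-1}, √(q−1) ). If (ξ_t)_{t=1}^T is a martingale difference sequence with respect to a filtration (F_t) and each ξ_t ∈ L^q, then the sum M_T = Σ_{t=1}^T ξ_t satisfies ‖M_T‖_q^{q′} ≤ K_q^{q′} · Σ_{t=1}^T ‖ξ_t‖_q^{q′}. -/

import Mathlib

open MeasureTheory ProbabilityTheory

open Real Filter
open scoped NNReal ENNReal

set_option linter.unusedSectionVars false


noncomputable def sp (a t : ℝ) : ℝ := t * |t| ^ (a - 1)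

lemma sp_zero (a : ℝ) : sp a 0 = 0 := by simp [sp]

lemma abs_sp {a : ℝ} (ha : 0 < a) (t : ℝ) : |sp a t| = |t| ^ a := by
  rcases eq_or_ne t 0 with rfl | h
  · simp [sp, Real.zero_rpow ha.ne']
  · rw [sp, abs_mul, abs_of_nonneg (Real.rpow_nonneg (abs_nonneg t) _), mul_comm,
      ← Real.rpow_add_one (abs_ne_zero.2 h)]
    norm_num

lemma sp_neg (a t : ℝ) : sp a (-t) = - sp a t := by
  simp [sp, neg_mul]

lemma sp_of_nonneg {a t : ℝ} (ha : 0 < a) (ht : 0 ≤ t) : sp a t = t ^ a := by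
  rcases eq_or_lt_of_le ht with rfl | h
  · simp [sp, Real.zero_rpow ha.ne']
  · rw [sp, abs_of_pos h, mul_comm, ← Real.rpow_add_one h.ne']
    norm_num

lemma sp_eq_mathlib {a : ℝ} (t : ℝ) : a * |t| ^ (a - 2) * t = a * sp (a - 1) t := by
  rw [sp]; ring_nf

lemma hasDerivAt_abs_rpow' {q : ℝ} (hq : 1 < q) (x : ℝ) :
    HasDerivAt (fun t : ℝ => |t| ^ q) (q * sp (q - 1) x) x := by
  have h := hasDerivAt_abs_rpow x hq
  rwa [sp_eq_mathlib] at h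

lemma hasDerivAt_zero_of_abs_le {b : ℝ} (hb : 0 < b) {f : ℝ → ℝ}
    (h : ∀ t, |f t| ≤ |t| ^ (1 + b)) : HasDerivAt f 0 0 := by
  have hf0 : f 0 = 0 := by
    have := h 0
    rw [abs_zero, Real.zero_rpow (by linarith)] at this
    exact abs_eq_zero.1 (le_antisymm this (abs_nonneg _))
  rw [hasDerivAt_iff_tendsto_slope]
  have hbnd : ∀ t : ℝ, ‖slope f 0 t‖ ≤ |t| ^ b := by
    intro t
    rcases eq_or_ne t 0 with rfl | ht
    · simp [slope, hf0, Real.zero_rpow hb.ne']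
    · have hs : slope f 0 t = f t / t := by
        simp [slope, hf0]
        ring
      rw [hs, Real.norm_eq_abs, abs_div]
      rw [div_le_iff₀ (abs_pos.2 ht)]
      calc |f t| ≤ |t| ^ (1 + b) := h t
        _ = |t| ^ b * |t| := by
            rw [add_comm, Real.rpow_add_one (abs_ne_zero.2 ht)]
  have htend : Tendsto (fun t : ℝ => |t| ^ b) (nhdsWithin 0 {(0:ℝ)}ᶜ) (nhds 0) := by
    have hc : ContinuousAt (fun t : ℝ => |t| ^ b) 0 := by
      have h1 : ContinuousAt (fun x : ℝ => x ^ b) |(0:ℝ)| :=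
        Real.continuousAt_rpow_const _ _ (Or.inr hb.le)
      exact h1.comp continuous_abs.continuousAt
    have h00 : |(0:ℝ)| ^ b = 0 := by simp [Real.zero_rpow hb.ne']
    have := hc.tendsto
    rw [h00] at this
    exact tendsto_nhdsWithin_of_tendsto_nhds this
  exact squeeze_zero_norm hbnd htend

lemma hasDerivAt_sp {a : ℝ} (ha : 1 ≤ a) (x : ℝ) :
    HasDerivAt (sp a) (a * |x| ^ (a - 1)) x := by
  rcases eq_or_lt_of_le ha with rfl | ha1
  · have hsp : sp 1 = fun t : ℝ => t := by
      funext t; simp [sp]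
    rw [hsp]
    simpa using hasDerivAt_id' x
  · have ha0 : 0 < a := by linarith
    rcases lt_trichotomy x 0 with hx | hx | hx
    · have key : HasDerivAt (fun t : ℝ => -((-t) ^ a)) (a * (-x) ^ (a - 1)) x := by
        have h1 : HasDerivAt (fun u : ℝ => u ^ a) (a * (-x) ^ (a - 1)) (-x) :=
          Real.hasDerivAt_rpow_const (Or.inl (by linarith))
        have h2 : HasDerivAt (fun t : ℝ => -t) (-1 : ℝ) x := (hasDerivAt_id x).neg
        have := (h1.comp x h2).neg
        simp only [mul_neg, mul_one, neg_neg] at this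
        exact this
      have heq : sp a =ᶠ[nhds x] (fun t : ℝ => -((-t) ^ a)) := by
        filter_upwards [eventually_lt_nhds hx] with t ht
        rw [← neg_neg t, sp_neg, sp_of_nonneg ha0 (by linarith : (0:ℝ) ≤ -t)]
        ring_nf
      have habs : a * |x| ^ (a - 1) = a * (-x) ^ (a - 1) := by rw [abs_of_neg hx]
      rw [habs]
      exact key.congr_of_eventuallyEq heq
    · subst hx
      have h0 : a * |(0:ℝ)| ^ (a - 1) = 0 := by
        simp [Real.zero_rpow (by linarith : a - 1 ≠ 0)]
      rw [h0]
      apply hasDerivAt_zero_of_abs_le (by linarith : 0 < a - 1)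
      intro t
      rw [abs_sp ha0]
      have h1 : 1 + (a - 1) = a := by ring
      rw [h1]
    · have key : HasDerivAt (fun t : ℝ => t ^ a) (a * x ^ (a - 1)) x :=
        Real.hasDerivAt_rpow_const (Or.inl hx.ne')
      have heq : sp a =ᶠ[nhds x] (fun t : ℝ => t ^ a) := by
        filter_upwards [eventually_gt_nhds hx] with t ht
        rw [sp_of_nonneg ha0 ht.le]
      have habs : a * |x| ^ (a - 1) = a * x ^ (a - 1) := by rw [abs_of_pos hx]
      rw [habs]
      exact key.congr_of_eventuallyEq heq

lemma real_add_rpow_le {p : ℝ} (hp0 : 0 ≤ p) (hp1 : p ≤ 1) {x y : ℝ} (hx : 0 ≤ x) (hy : 0 ≤ y) :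
    (x + y) ^ p ≤ x ^ p + y ^ p := by
  have h := NNReal.rpow_add_le_add_rpow (Real.toNNReal x) (Real.toNNReal y) hp0 hp1
  have hc : ((Real.toNNReal x + Real.toNNReal y : ℝ≥0) : ℝ) = x + y := by
    simp [Real.coe_toNNReal x hx, Real.coe_toNNReal y hy]
  calc (x + y) ^ p = ((Real.toNNReal x + Real.toNNReal y : ℝ≥0) : ℝ) ^ p := by rw [hc]
    _ = (((Real.toNNReal x + Real.toNNReal y : ℝ≥0) ^ p : ℝ≥0) : ℝ) := by
        rw [NNReal.coe_rpow]
    _ ≤ ((Real.toNNReal x ^ p + Real.toNNReal y ^ p : ℝ≥0) : ℝ) := by exact_mod_cast h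
    _ = x ^ p + y ^ p := by
        push_cast [NNReal.coe_rpow, Real.coe_toNNReal x hx, Real.coe_toNNReal y hy]
        ring

lemma rpow_sub_rpow_le {a : ℝ} (ha0 : 0 < a) (ha1 : a ≤ 1) {t s : ℝ} (ht : 0 ≤ t) (hts : t ≤ s) :
    s ^ a - t ^ a ≤ (s - t) ^ a := by
  have h := real_add_rpow_le ha0.le ha1 (sub_nonneg.2 hts) ht
  have he : s - t + t = s := by ring
  rw [he] at h
  linarith

lemma add_rpow_le_two_rpow {a : ℝ} (ha0 : 0 < a) (ha1 : a ≤ 1) {x y : ℝ} (hx : 0 ≤ x)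
    (hy : 0 ≤ y) : x ^ a + y ^ a ≤ 2 ^ (1 - a) * (x + y) ^ a := by
  have hp : (1:ℝ) ≤ 1 / a := by
    rw [le_div_iff₀ ha0]; linarith
  have key := Real.arith_mean_le_rpow_mean (Finset.univ : Finset (Fin 2))
    (fun _ => (2:ℝ)⁻¹) ![x ^ a, y ^ a]
    (fun i _ => by positivity) (by norm_num [Fin.sum_univ_two])
    (fun i _ => by
      fin_cases i <;>
        simp [Real.rpow_nonneg hx, Real.rpow_nonneg hy]) hp
  rw [Fin.sum_univ_two, Fin.sum_univ_two] at key
  simp only [Matrix.cons_val_zero, Matrix.cons_val_one, Matrix.head_cons] at key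
  have hxa : (x ^ a) ^ (1/a) = x := by
    rw [← Real.rpow_mul hx, mul_one_div, div_self ha0.ne', Real.rpow_one]
  have hya : (y ^ a) ^ (1/a) = y := by
    rw [← Real.rpow_mul hy, mul_one_div, div_self ha0.ne', Real.rpow_one]
  rw [hxa, hya, one_div_one_div] at key
  -- key : 2⁻¹ * x ^ a + 2⁻¹ * y ^ a ≤ (2⁻¹ * x + 2⁻¹ * y) ^ a
  have h2 : (2:ℝ)⁻¹ * x + 2⁻¹ * y = (x + y) / 2 := by ring
  rw [h2] at key
  have hdiv : ((x + y) / 2) ^ a = (x + y) ^ a / 2 ^ a :=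
    Real.div_rpow (by linarith) (by norm_num) a
  rw [hdiv] at key
  have h2a : (0:ℝ) < 2 ^ a := Real.rpow_pos_of_pos (by norm_num) a
  have h1a : (2:ℝ) ^ (1 - a) = 2 / 2 ^ a := by
    rw [Real.rpow_sub (by norm_num), Real.rpow_one]
  rw [h1a]
  have hfin := mul_le_mul_of_nonneg_left key (by norm_num : (0:ℝ) ≤ 2)
  calc x ^ a + y ^ a = 2 * (2⁻¹ * x ^ a + 2⁻¹ * y ^ a) := by ring
    _ ≤ 2 * ((x + y) ^ a / 2 ^ a) := hfin
    _ = 2 / 2 ^ a * (x + y) ^ a := by ring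

lemma sp_sub_le_aux {a : ℝ} (ha0 : 0 < a) (ha1 : a ≤ 1) {t s : ℝ} (hts : t ≤ s) :
    |sp a s - sp a t| ≤ 2 ^ (1 - a) * (s - t) ^ a := by
  have hone : (1:ℝ) ≤ 2 ^ (1 - a) := Real.one_le_rpow (by norm_num) (by linarith)
  rcases le_or_gt 0 t with ht | ht
  · have hst : (0:ℝ) ≤ s := le_trans ht hts
    rw [sp_of_nonneg ha0 ht, sp_of_nonneg ha0 hst]
    rw [abs_of_nonneg (sub_nonneg.2 (Real.rpow_le_rpow ht hts ha0.le))]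
    calc s ^ a - t ^ a ≤ (s - t) ^ a := rpow_sub_rpow_le ha0 ha1 ht hts
      _ ≤ 2 ^ (1 - a) * (s - t) ^ a :=
        le_mul_of_one_le_left (Real.rpow_nonneg (by linarith) a) hone
  · rcases le_or_gt s 0 with hs | hs
    · have h1 : sp a s = -((-s) ^ a) := by
        rw [← neg_neg s, sp_neg, sp_of_nonneg ha0 (by linarith : (0:ℝ) ≤ -s)]
        ring_nf
      have h2 : sp a t = -((-t) ^ a) := by
        rw [← neg_neg t, sp_neg, sp_of_nonneg ha0 (by linarith : (0:ℝ) ≤ -t)]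
        ring_nf
      rw [h1, h2]
      have hre : -((-s) ^ a) - -((-t) ^ a) = (-t) ^ a - (-s) ^ a := by ring
      rw [hre]
      have hmono : (-s) ^ a ≤ (-t) ^ a := Real.rpow_le_rpow (by linarith) (by linarith) ha0.le
      rw [abs_of_nonneg (sub_nonneg.2 hmono)]
      calc (-t) ^ a - (-s) ^ a ≤ (-t - -s) ^ a :=
          rpow_sub_rpow_le ha0 ha1 (by linarith) (by linarith)
        _ = (s - t) ^ a := by ring_nf
        _ ≤ 2 ^ (1 - a) * (s - t) ^ a :=
          le_mul_of_one_le_left (Real.rpow_nonneg (by linarith) a) hone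
    · have h1 : sp a s = s ^ a := sp_of_nonneg ha0 hs.le
      have h2 : sp a t = -((-t) ^ a) := by
        rw [← neg_neg t, sp_neg, sp_of_nonneg ha0 (by linarith : (0:ℝ) ≤ -t)]
        ring_nf
      rw [h1, h2, sub_neg_eq_add]
      rw [abs_of_nonneg (add_nonneg (Real.rpow_nonneg hs.le a)
        (Real.rpow_nonneg (by linarith : (0:ℝ) ≤ -t) a))]
      calc s ^ a + (-t) ^ a ≤ 2 ^ (1 - a) * (s + -t) ^ a :=
          add_rpow_le_two_rpow ha0 ha1 hs.le (by linarith)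
        _ = 2 ^ (1 - a) * (s - t) ^ a := by ring_nf

lemma sp_sub_le {a : ℝ} (ha0 : 0 < a) (ha1 : a ≤ 1) (s t : ℝ) :
    |sp a s - sp a t| ≤ 2 ^ (1 - a) * |s - t| ^ a := by
  rcases le_total t s with h | h
  · rw [abs_of_nonneg (sub_nonneg.2 h)]
    exact sp_sub_le_aux ha0 ha1 h
  · rw [abs_sub_comm, abs_sub_comm s t]
    rw [abs_of_nonneg (sub_nonneg.2 h)]
    exact sp_sub_le_aux ha0 ha1 h

lemma continuous_abs_rpow {q : ℝ} (hq : 0 < q) : Continuous (fun t : ℝ => |t| ^ q) := by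
  rw [continuous_iff_continuousAt]
  intro x
  exact (Real.continuousAt_rpow_const _ _ (Or.inr hq.le)).comp continuous_abs.continuousAt

lemma continuous_sp {a : ℝ} (ha : 0 < a) : Continuous (sp a) := by
  rcases le_or_gt a 1 with ha1 | ha1
  · rw [continuous_iff_continuousAt]
    intro x
    rw [ContinuousAt, ← tendsto_sub_nhds_zero_iff]
    have hb : Tendsto (fun s : ℝ => 2 ^ (1 - a) * |s - x| ^ a) (nhds x) (nhds 0) := by
      have hc : Continuous fun s : ℝ => 2 ^ (1 - a) * |s - x| ^ a :=
        continuous_const.mul ((continuous_abs_rpow ha).comp (continuous_id.sub continuous_const))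
      have h0 : (2:ℝ) ^ (1 - a) * |x - x| ^ a = 0 := by
        simp [Real.zero_rpow ha.ne']
      have := hc.continuousAt (x := x)
      rw [ContinuousAt, h0] at this
      exact this
    exact squeeze_zero_norm (fun s => sp_sub_le ha ha1 s x) hb
  · rw [continuous_iff_continuousAt]
    intro x
    exact (hasDerivAt_sp ha1.le x).continuousAt

lemma pointwise_A {q : ℝ} (hq1 : 1 < q) (hq2 : q ≤ 2) (x y : ℝ) :
    |x + y| ^ q ≤ |x| ^ q + q * sp (q - 1) x * y + 2 ^ (2 - q) * |y| ^ q := by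
  have ha0 : 0 < q - 1 := by linarith
  have ha1 : q - 1 ≤ 1 := by linarith
  set a := q - 1 with hadef
  -- F s = |x + s| ^ q - q * sp a x * s
  set F : ℝ → ℝ := fun s => |x + s| ^ q - q * sp a x * s with hF
  have hderiv : ∀ s : ℝ, HasDerivAt F (q * sp a (x + s) - q * sp a x) s := by
    intro s
    have h1 : HasDerivAt (fun t : ℝ => |x + t| ^ q) (q * sp a (x + s)) s := by
      have hinner : HasDerivAt (fun t : ℝ => x + t) 1 s := (hasDerivAt_id s).const_add x
      have houter := hasDerivAt_abs_rpow' hq1 (x + s)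
      have := houter.comp s hinner
      simp only [mul_one] at this
      exact this
    have h2 : HasDerivAt (fun t : ℝ => q * sp a x * t) (q * sp a x) s := by
      simpa using (hasDerivAt_id s).const_mul (q * sp a x)
    exact h1.sub h2
  have hcont : Continuous fun s : ℝ => q * sp a (x + s) - q * sp a x :=
    ((continuous_const.mul ((continuous_sp ha0).comp
      (continuous_const.add continuous_id))).sub continuous_const)
  have hFTC : ∫ s in (0:ℝ)..y, (q * sp a (x + s) - q * sp a x) = F y - F 0 :=
    intervalIntegral.integral_eq_sub_of_hasDerivAt (fun s _ => hderiv s)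
      (hcont.intervalIntegrable 0 y)
  have hF0 : F 0 = |x| ^ q := by simp [hF]
  have hFy : F y = |x + y| ^ q - q * sp a x * y := by simp [hF]
  -- bound the integral
  have hbd : ∀ s : ℝ, ‖q * sp a (x + s) - q * sp a x‖ ≤ q * 2 ^ (2 - q) * |s| ^ a := by
    intro s
    have : q * sp a (x + s) - q * sp a x = q * (sp a (x + s) - sp a x) := by ring
    rw [this, Real.norm_eq_abs, abs_mul, abs_of_pos (by linarith : (0:ℝ) < q)]
    have h := sp_sub_le ha0 ha1 (x + s) x
    have hxx : x + s - x = s := by ring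
    rw [hxx] at h
    have h21 : (2:ℝ) ^ (1 - a) = 2 ^ (2 - q) := by rw [hadef]; congr 1; ring
    rw [h21] at h
    calc q * |sp a (x + s) - sp a x| ≤ q * (2 ^ (2 - q) * |s| ^ a) :=
        mul_le_mul_of_nonneg_left h (by linarith)
      _ = q * 2 ^ (2 - q) * |s| ^ a := by ring
  have hgcont : Continuous fun s : ℝ => q * 2 ^ (2 - q) * |s| ^ a :=
    continuous_const.mul (continuous_abs_rpow ha0)
  have hgint : ∫ s in (0:ℝ)..y, q * 2 ^ (2 - q) * |s| ^ a = 2 ^ (2 - q) * sp q y := by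
    have hader : ∀ s : ℝ, HasDerivAt (fun u : ℝ => 2 ^ (2 - q) * sp q u)
        (q * 2 ^ (2 - q) * |s| ^ a) s := by
      intro s
      have := (hasDerivAt_sp (by linarith : (1:ℝ) ≤ q) s).const_mul ((2:ℝ) ^ (2 - q))
      rw [show q * 2 ^ (2 - q) * |s| ^ a = 2 ^ (2 - q) * (q * |s| ^ (q - 1)) by rw [hadef]; ring]
      exact this
    have := intervalIntegral.integral_eq_sub_of_hasDerivAt (fun s _ => hader s)
      (hgcont.intervalIntegrable 0 y)
    rw [this, sp_zero]
    ring
  have hnorm := intervalIntegral.norm_integral_le_abs_of_norm_le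
    (g := fun s : ℝ => q * 2 ^ (2 - q) * |s| ^ a)
    (μ := MeasureTheory.volume) (f := fun s : ℝ => q * sp a (x + s) - q * sp a x)
    (a := 0) (b := y)
    (Filter.Eventually.of_forall fun t => hbd t)
    (hgcont.intervalIntegrable 0 y)
  rw [hFTC, hgint] at hnorm
  have habs : |2 ^ (2 - q) * sp q y| = 2 ^ (2 - q) * |y| ^ q := by
    rw [abs_mul, abs_sp (by linarith : (0:ℝ) < q),
      abs_of_pos (Real.rpow_pos_of_pos (by norm_num) _)]
  rw [habs, Real.norm_eq_abs] at hnorm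
  have hle := (le_abs_self (F y - F 0)).trans hnorm
  rw [hFy, hF0] at hle
  linarith

lemma const_cmp {q : ℝ} (hq1 : 1 < q) (hq2 : q ≤ 2) : (2:ℝ) ^ (2 - q) ≤ (q - 1) ^ (-q) := by
  have h1 : (0:ℝ) < q - 1 := by linarith
  have hA : (0:ℝ) < (2:ℝ) ^ (2 - q) := Real.rpow_pos_of_pos (by norm_num) _
  have hB : (0:ℝ) < (q - 1) ^ (-q) := Real.rpow_pos_of_pos h1 _
  rw [← Real.log_le_log_iff hA hB, Real.log_rpow (by norm_num), Real.log_rpow h1]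
  have hlog2 : Real.log 2 ≤ 1 := by
    have := Real.log_le_sub_one_of_pos (by norm_num : (0:ℝ) < 2)
    linarith
  have hlogq : Real.log (q - 1) ≤ q - 2 := by
    have := Real.log_le_sub_one_of_pos h1
    linarith
  have hlogq0 : Real.log (q - 1) ≤ 0 := Real.log_nonpos (by linarith) (by linarith)
  have hlog2nn : 0 ≤ Real.log 2 := Real.log_nonneg (by norm_num)
  nlinarith [mul_le_mul_of_nonneg_left hlog2 (by linarith : (0:ℝ) ≤ 2 - q),
    mul_le_mul_of_nonneg_left hlogq0 (by linarith : (0:ℝ) ≤ q - 1)]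

section Measure

variable {Ω : Type*} {m0 : MeasurableSpace Ω} {μ : MeasureTheory.Measure Ω}
  [MeasureTheory.IsProbabilityMeasure μ]

lemma integrable_abs_rpow {q : ℝ} (hq : 0 < q) {f : Ω → ℝ}
    (hf : MemLp f (ENNReal.ofReal q) μ) :
    Integrable (fun ω => |f ω| ^ q) μ := by
  have h := hf.integrable_norm_rpow (by simp [ENNReal.ofReal_eq_zero]; linarith)
    ENNReal.ofReal_ne_top
  rw [ENNReal.toReal_ofReal hq.le] at h
  simpa [Real.norm_eq_abs] using h

lemma memLp_one_le {q : ℝ} (hq : 1 ≤ q) {f : Ω → ℝ} (hf : MemLp f (ENNReal.ofReal q) μ) :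
    Integrable f μ :=
  hf.integrable (by rw [← ENNReal.ofReal_one]; exact ENNReal.ofReal_le_ofReal hq)

lemma integrable_sp_mul {q : ℝ} (hq : 1 < q) {X Y : Ω → ℝ}
    (hX : MemLp X (ENNReal.ofReal q) μ) (hY : MemLp Y (ENNReal.ofReal q) μ) :
    Integrable (fun ω => sp (q - 1) (X ω) * Y ω) μ := by
  have hq0 : (0:ℝ) < q := by linarith
  have ha0 : (0:ℝ) < q - 1 := by linarith
  have hIX : Integrable (fun ω => |X ω| ^ q) μ := integrable_abs_rpow hq0 hX
  have hIY : Integrable (fun ω => |Y ω| ^ q) μ := integrable_abs_rpow hq0 hY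
  have hg : Integrable (fun ω => (q - 1)/q * |X ω| ^ q + (1/q) * |Y ω| ^ q) μ :=
    (hIX.const_mul _).add (hIY.const_mul _)
  have hmeas : AEStronglyMeasurable (fun ω => sp (q - 1) (X ω) * Y ω) μ :=
    ((continuous_sp ha0).comp_aestronglyMeasurable hX.aestronglyMeasurable).mul
      hY.aestronglyMeasurable
  refine hg.mono' hmeas (Filter.Eventually.of_forall fun ω => ?_)
  have hconj : Real.HolderConjugate (q/(q-1)) q := by
    rw [Real.holderConjugate_iff]
    constructor
    · rw [lt_div_iff₀ ha0]; linarith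
    · field_simp
      ring
  have hyoung := Real.young_inequality_of_nonneg
    (Real.rpow_nonneg (abs_nonneg (X ω)) (q-1)) (abs_nonneg (Y ω)) hconj
  have hpow : (|X ω| ^ (q-1)) ^ (q/(q-1)) = |X ω| ^ q := by
    rw [← Real.rpow_mul (abs_nonneg _)]
    congr 1
    field_simp
  rw [hpow] at hyoung
  have habs : ‖sp (q-1) (X ω) * Y ω‖ = |X ω| ^ (q-1) * |Y ω| := by
    rw [Real.norm_eq_abs, abs_mul, abs_sp ha0]
  rw [habs]
  calc |X ω| ^ (q-1) * |Y ω| ≤ |X ω| ^ q / (q/(q-1)) + |Y ω| ^ q / q := hyoung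
    _ = (q - 1)/q * |X ω| ^ q + (1/q) * |Y ω| ^ q := by
        rw [div_div_eq_mul_div]
        ring

lemma orth {m : MeasurableSpace Ω} (hm : m ≤ m0) {q : ℝ} (hq : 1 < q) {X Y : Ω → ℝ}
    (hXm : StronglyMeasurable[m] X) (hX : MemLp X (ENNReal.ofReal q) μ)
    (hY : MemLp Y (ENNReal.ofReal q) μ) (hY0 : μ[Y|m] =ᵐ[μ] 0) :
    ∫ ω, sp (q - 1) (X ω) * Y ω ∂μ = 0 := by
  have ha0 : (0:ℝ) < q - 1 := by linarith
  haveI : MeasureTheory.IsFiniteMeasure (μ.trim hm) := isFiniteMeasure_trim hm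
  have hspXm : StronglyMeasurable[m] (fun ω => sp (q - 1) (X ω)) :=
    (continuous_sp ha0).comp_stronglyMeasurable hXm
  have hint : Integrable ((fun ω => sp (q - 1) (X ω)) * Y) μ := by
    exact integrable_sp_mul hq hX hY
  have hYint : Integrable Y μ := memLp_one_le hq.le hY
  have hmul := condExp_mul_of_stronglyMeasurable_left hspXm hint hYint
  have hzero : (fun ω => sp (q - 1) (X ω)) * μ[Y|m] =ᵐ[μ] 0 := by
    filter_upwards [hY0] with ω h
    simp [h]
  calc ∫ ω, sp (q - 1) (X ω) * Y ω ∂μ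
      = ∫ ω, ((fun ω => sp (q - 1) (X ω)) * Y) ω ∂μ := by rfl
    _ = ∫ ω, (μ[(fun ω => sp (q - 1) (X ω)) * Y|m]) ω ∂μ := (integral_condExp hm).symm
    _ = 0 := by
        rw [integral_congr_ae (hmul.trans hzero)]
        simp

lemma step_A {m : MeasurableSpace Ω} (hm : m ≤ m0) {q : ℝ} (hq1 : 1 < q) (hq2 : q ≤ 2)
    {X Y : Ω → ℝ} (hXm : StronglyMeasurable[m] X) (hX : MemLp X (ENNReal.ofReal q) μ)
    (hY : MemLp Y (ENNReal.ofReal q) μ) (hY0 : μ[Y|m] =ᵐ[μ] 0) :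
    ∫ ω, |X ω + Y ω| ^ q ∂μ ≤ ∫ ω, |X ω| ^ q ∂μ + 2 ^ (2 - q) * ∫ ω, |Y ω| ^ q ∂μ := by
  have hq0 : (0:ℝ) < q := by linarith
  have hIXY : Integrable (fun ω => |X ω + Y ω| ^ q) μ := integrable_abs_rpow hq0 (hX.add hY)
  have hIX : Integrable (fun ω => |X ω| ^ q) μ := integrable_abs_rpow hq0 hX
  have hIY : Integrable (fun ω => |Y ω| ^ q) μ := integrable_abs_rpow hq0 hY
  have hIsp : Integrable (fun ω => sp (q - 1) (X ω) * Y ω) μ := integrable_sp_mul hq1 hX hY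
  have hIq : Integrable (fun ω => q * (sp (q - 1) (X ω) * Y ω)) μ := hIsp.const_mul q
  have hIc : Integrable (fun ω => 2 ^ (2 - q) * |Y ω| ^ q) μ := hIY.const_mul _
  have h12 : Integrable (fun ω => |X ω| ^ q + q * (sp (q - 1) (X ω) * Y ω)) μ := hIX.add hIq
  have hRHS : Integrable
      (fun ω => |X ω| ^ q + q * (sp (q - 1) (X ω) * Y ω) + 2 ^ (2 - q) * |Y ω| ^ q) μ :=
    h12.add hIc
  have hmono := integral_mono hIXY hRHS (fun ω => by
    have := pointwise_A hq1 hq2 (X ω) (Y ω)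
    simpa [mul_assoc] using this)
  rw [integral_add h12 hIc, integral_add hIX hIq, integral_const_mul, integral_const_mul,
    orth hm hq1 hXm hX hY hY0] at hmono
  simpa using hmono
end Measure

section MeasureB

variable {Ω : Type*} {m0 : MeasurableSpace Ω} {μ : MeasureTheory.Measure Ω}
  [MeasureTheory.IsProbabilityMeasure μ]

lemma abs_rpow_two (x : ℝ) : |x| ^ (2:ℝ) = x * x := by
  rw [show (2:ℝ) = ((2:ℕ):ℝ) by norm_num, Real.rpow_natCast]
  rw [pow_two, abs_mul_abs_self]

lemma integrable_abs_rpow_mul {q : ℝ} (hq : 1 < q) {W Y : Ω → ℝ}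
    (hW : MemLp W (ENNReal.ofReal q) μ) (hY : MemLp Y (ENNReal.ofReal q) μ) :
    Integrable (fun ω => |W ω| ^ (q - 1) * |Y ω|) μ := by
  have hq0 : (0:ℝ) < q := by linarith
  have ha0 : (0:ℝ) < q - 1 := by linarith
  have hIW : Integrable (fun ω => |W ω| ^ q) μ := integrable_abs_rpow hq0 hW
  have hIY : Integrable (fun ω => |Y ω| ^ q) μ := integrable_abs_rpow hq0 hY
  have hg : Integrable (fun ω => (q - 1)/q * |W ω| ^ q + (1/q) * |Y ω| ^ q) μ :=
    (hIW.const_mul _).add (hIY.const_mul _)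
  have habsY : AEStronglyMeasurable (fun ω => |Y ω|) μ := hY.aestronglyMeasurable.norm
  have hmeas : AEStronglyMeasurable (fun ω => |W ω| ^ (q - 1) * |Y ω|) μ :=
    ((continuous_abs_rpow ha0).comp_aestronglyMeasurable hW.aestronglyMeasurable).mul habsY
  refine hg.mono' hmeas (Filter.Eventually.of_forall fun ω => ?_)
  have hconj : Real.HolderConjugate (q/(q-1)) q := by
    rw [Real.holderConjugate_iff]
    constructor
    · rw [lt_div_iff₀ ha0]; linarith
    · field_simp
      ring
  have hyoung := Real.young_inequality_of_nonneg
    (Real.rpow_nonneg (abs_nonneg (W ω)) (q-1)) (abs_nonneg (Y ω)) hconj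
  have hpow : (|W ω| ^ (q-1)) ^ (q/(q-1)) = |W ω| ^ q := by
    rw [← Real.rpow_mul (abs_nonneg _)]
    congr 1
    field_simp
  rw [hpow] at hyoung
  have habs : ‖|W ω| ^ (q-1) * |Y ω|‖ = |W ω| ^ (q-1) * |Y ω| := by
    rw [Real.norm_eq_abs, abs_mul, abs_of_nonneg (Real.rpow_nonneg (abs_nonneg _) _),
      abs_abs]
  rw [habs]
  calc |W ω| ^ (q-1) * |Y ω| ≤ |W ω| ^ q / (q/(q-1)) + |Y ω| ^ q / q := hyoung
    _ = (q - 1)/q * |W ω| ^ q + (1/q) * |Y ω| ^ q := by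
        rw [div_div_eq_mul_div]
        ring

lemma integrable_abs_rpow_mul_sq {q : ℝ} (hq : 2 ≤ q) {W Y : Ω → ℝ}
    (hW : MemLp W (ENNReal.ofReal q) μ) (hY : MemLp Y (ENNReal.ofReal q) μ) :
    Integrable (fun ω => |W ω| ^ (q - 2) * |Y ω| ^ (2:ℝ)) μ := by
  have hq0 : (0:ℝ) < q := by linarith
  have ha0 : (0:ℝ) ≤ q - 2 := by linarith
  have hIW : Integrable (fun ω => |W ω| ^ q) μ := integrable_abs_rpow hq0 hW
  have hIY : Integrable (fun ω => |Y ω| ^ q) μ := integrable_abs_rpow hq0 hY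
  have hg : Integrable (fun ω => (q - 2)/q * |W ω| ^ q + (2/q) * |Y ω| ^ q) μ :=
    (hIW.const_mul _).add (hIY.const_mul _)
  have hmeasW : AEStronglyMeasurable (fun ω => |W ω| ^ (q - 2)) μ := by
    rcases eq_or_lt_of_le ha0 with h | h
    · have : (fun ω => |W ω| ^ (q - 2)) = fun _ => (1:ℝ) := by
        funext ω
        rw [← h, Real.rpow_zero]
      rw [this]
      exact aestronglyMeasurable_const
    · exact (continuous_abs_rpow h).comp_aestronglyMeasurable hW.aestronglyMeasurable
  have hmeas : AEStronglyMeasurable (fun ω => |W ω| ^ (q - 2) * |Y ω| ^ (2:ℝ)) μ :=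
    hmeasW.mul ((continuous_abs_rpow (by norm_num : (0:ℝ) < 2)).comp_aestronglyMeasurable
      hY.aestronglyMeasurable)
  refine hg.mono' hmeas (Filter.Eventually.of_forall fun ω => ?_)
  have hgm := Real.geom_mean_le_arith_mean2_weighted
    (by positivity : (0:ℝ) ≤ (q-2)/q) (by positivity : (0:ℝ) ≤ 2/q)
    (Real.rpow_nonneg (abs_nonneg (W ω)) q) (Real.rpow_nonneg (abs_nonneg (Y ω)) q)
    (by field_simp; ring)
  have h1 : (|W ω| ^ q) ^ ((q-2)/q) = |W ω| ^ (q - 2) := by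
    rw [← Real.rpow_mul (abs_nonneg _)]
    congr 1
    field_simp
  have h2 : (|Y ω| ^ q) ^ ((2:ℝ)/q) = |Y ω| ^ (2:ℝ) := by
    rw [← Real.rpow_mul (abs_nonneg _)]
    congr 1
    field_simp
  rw [h1, h2] at hgm
  have habs : ‖|W ω| ^ (q-2) * |Y ω| ^ (2:ℝ)‖ = |W ω| ^ (q-2) * |Y ω| ^ (2:ℝ) := by
    rw [Real.norm_eq_abs, abs_mul, abs_of_nonneg (Real.rpow_nonneg (abs_nonneg _) _),
      abs_of_nonneg (Real.rpow_nonneg (abs_nonneg _) _)]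
  rw [habs]
  exact hgm

lemma deriv_g {q : ℝ} (hq : 2 ≤ q) {X Y : Ω → ℝ}
    (hX : MemLp X (ENNReal.ofReal q) μ) (hY : MemLp Y (ENNReal.ofReal q) μ) (t₀ : ℝ) :
    HasDerivAt (fun t : ℝ => ∫ ω, |X ω + t * Y ω| ^ q ∂μ)
      (∫ ω, q * (sp (q - 1) (X ω + t₀ * Y ω) * Y ω) ∂μ) t₀ := by
  have hq1 : (1:ℝ) < q := by linarith
  have hq0 : (0:ℝ) < q := by linarith
  have ha0 : (0:ℝ) < q - 1 := by linarith
  set W : Ω → ℝ := fun ω => ‖X ω‖ + (|t₀| + 1) * ‖Y ω‖ with hWdef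
  have hW : MemLp W (ENNReal.ofReal q) μ := hX.norm.add ((hY.norm).const_mul _)
  have hmeasZ : ∀ t : ℝ, AEStronglyMeasurable (fun ω => X ω + t * Y ω) μ := fun t =>
    hX.aestronglyMeasurable.add (hY.aestronglyMeasurable.const_mul t)
  have key := hasDerivAt_integral_of_dominated_loc_of_deriv_le
    (F := fun t (ω : Ω) => |X ω + t * Y ω| ^ q)
    (F' := fun t (ω : Ω) => q * (sp (q - 1) (X ω + t * Y ω) * Y ω))
    (x₀ := t₀)
    (bound := fun ω => q * (|W ω| ^ (q - 1) * |Y ω|))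
    (Metric.ball_mem_nhds t₀ one_pos)
    (Filter.Eventually.of_forall fun t =>
      ((continuous_abs_rpow hq0).comp_aestronglyMeasurable (hmeasZ t)))
    (integrable_abs_rpow hq0 (hX.add (hY.const_mul t₀)))
    ((((continuous_sp ha0).comp_aestronglyMeasurable (hmeasZ t₀)).mul
      hY.aestronglyMeasurable).const_mul q)
    (Filter.Eventually.of_forall fun ω => by
      intro t ht
      rw [Metric.mem_ball, Real.dist_eq] at ht
      have htle : |t| ≤ |t₀| + 1 := by
        have := abs_sub_abs_le_abs_sub t t₀
        linarith
      have hZle : |X ω + t * Y ω| ≤ |W ω| := by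
        have h1 : |X ω + t * Y ω| ≤ |X ω| + |t| * |Y ω| := by
          calc |X ω + t * Y ω| ≤ |X ω| + |t * Y ω| := abs_add_le _ _
            _ = |X ω| + |t| * |Y ω| := by rw [abs_mul]
        have h2 : W ω = |X ω| + (|t₀| + 1) * |Y ω| := rfl
        have h3 : 0 ≤ W ω := by
          rw [h2]; positivity
        rw [abs_of_nonneg h3, h2]
        have : |t| * |Y ω| ≤ (|t₀| + 1) * |Y ω| :=
          mul_le_mul_of_nonneg_right htle (abs_nonneg _)
        linarith
      have hnorm : ‖q * (sp (q - 1) (X ω + t * Y ω) * Y ω)‖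
          = q * (|X ω + t * Y ω| ^ (q - 1) * |Y ω|) := by
        rw [Real.norm_eq_abs, abs_mul, abs_mul, abs_sp ha0, abs_of_pos hq0]
      rw [hnorm]
      have : |X ω + t * Y ω| ^ (q - 1) ≤ |W ω| ^ (q - 1) :=
        Real.rpow_le_rpow (abs_nonneg _) hZle ha0.le
      have := mul_le_mul_of_nonneg_right this (abs_nonneg (Y ω))
      exact mul_le_mul_of_nonneg_left this hq0.le)
    ((integrable_abs_rpow_mul hq1 hW hY).const_mul q)
    (Filter.Eventually.of_forall fun ω => by
      intro t ht
      have hinner : HasDerivAt (fun t : ℝ => X ω + t * Y ω) (Y ω) t :=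
        (hasDerivAt_mul_const (Y ω)).const_add (X ω)
      have houter := hasDerivAt_abs_rpow' hq1 (X ω + t * Y ω)
      have := houter.comp t hinner
      simp only [mul_assoc] at this
      exact this)
  exact key.2

lemma deriv_g1 {q : ℝ} (hq : 2 ≤ q) {X Y : Ω → ℝ}
    (hX : MemLp X (ENNReal.ofReal q) μ) (hY : MemLp Y (ENNReal.ofReal q) μ) (t₀ : ℝ) :
    HasDerivAt (fun t : ℝ => ∫ ω, q * (sp (q - 1) (X ω + t * Y ω) * Y ω) ∂μ)
      (∫ ω, q * (q - 1) * (|X ω + t₀ * Y ω| ^ (q - 2) * |Y ω| ^ (2:ℝ)) ∂μ) t₀ := by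
  have hq1 : (1:ℝ) < q := by linarith
  have hq0 : (0:ℝ) < q := by linarith
  have ha0 : (0:ℝ) < q - 1 := by linarith
  have ha1 : (1:ℝ) ≤ q - 1 := by linarith
  set W : Ω → ℝ := fun ω => ‖X ω‖ + (|t₀| + 1) * ‖Y ω‖ with hWdef
  have hW : MemLp W (ENNReal.ofReal q) μ := hX.norm.add ((hY.norm).const_mul _)
  have hmeasZ : ∀ t : ℝ, AEStronglyMeasurable (fun ω => X ω + t * Y ω) μ := fun t =>
    hX.aestronglyMeasurable.add (hY.aestronglyMeasurable.const_mul t)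
  have hmeasq2 : AEStronglyMeasurable (fun ω => |X ω + t₀ * Y ω| ^ (q - 2)) μ := by
    rcases eq_or_lt_of_le (by linarith : (0:ℝ) ≤ q - 2) with h | h
    · have heq : (fun ω => |X ω + t₀ * Y ω| ^ (q - 2)) = fun _ => (1:ℝ) := by
        funext ω
        rw [← h, Real.rpow_zero]
      rw [heq]
      exact aestronglyMeasurable_const
    · exact (continuous_abs_rpow h).comp_aestronglyMeasurable (hmeasZ t₀)
  have key := hasDerivAt_integral_of_dominated_loc_of_deriv_le
    (F := fun t (ω : Ω) => q * (sp (q - 1) (X ω + t * Y ω) * Y ω))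
    (F' := fun t (ω : Ω) => q * (q - 1) * (|X ω + t * Y ω| ^ (q - 2) * |Y ω| ^ (2:ℝ)))
    (x₀ := t₀)
    (bound := fun ω => q * (q - 1) * (|W ω| ^ (q - 2) * |Y ω| ^ (2:ℝ)))
    (Metric.ball_mem_nhds t₀ one_pos)
    (Filter.Eventually.of_forall fun t =>
      (((continuous_sp ha0).comp_aestronglyMeasurable (hmeasZ t)).mul
        hY.aestronglyMeasurable).const_mul q)
    (by
      have h := integrable_sp_mul hq1 (hX.add (hY.const_mul t₀)) hY
      exact h.const_mul q)
    ((hmeasq2.mul ((continuous_abs_rpow (by norm_num : (0:ℝ) < 2)).comp_aestronglyMeasurable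
      hY.aestronglyMeasurable)).const_mul (q * (q - 1)))
    (Filter.Eventually.of_forall fun ω => by
      intro t ht
      rw [Metric.mem_ball, Real.dist_eq] at ht
      have htle : |t| ≤ |t₀| + 1 := by
        have := abs_sub_abs_le_abs_sub t t₀
        linarith
      have h3 : 0 ≤ W ω := by positivity
      have hZle : |X ω + t * Y ω| ≤ |W ω| := by
        have h1 : |X ω + t * Y ω| ≤ |X ω| + |t| * |Y ω| := by
          calc |X ω + t * Y ω| ≤ |X ω| + |t * Y ω| := abs_add_le _ _
            _ = |X ω| + |t| * |Y ω| := by rw [abs_mul]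
        rw [abs_of_nonneg h3]
        have : |t| * |Y ω| ≤ (|t₀| + 1) * |Y ω| :=
          mul_le_mul_of_nonneg_right htle (abs_nonneg _)
        have h2 : W ω = |X ω| + (|t₀| + 1) * |Y ω| := rfl
        rw [h2]
        linarith
      have hnorm : ‖q * (q - 1) * (|X ω + t * Y ω| ^ (q - 2) * |Y ω| ^ (2:ℝ))‖
          = q * (q - 1) * (|X ω + t * Y ω| ^ (q - 2) * |Y ω| ^ (2:ℝ)) := by
        rw [Real.norm_eq_abs, abs_of_nonneg]
        positivity
      rw [hnorm]
      have hle : |X ω + t * Y ω| ^ (q - 2) ≤ |W ω| ^ (q - 2) :=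
        Real.rpow_le_rpow (abs_nonneg _) hZle (by linarith)
      have := mul_le_mul_of_nonneg_right hle (Real.rpow_nonneg (abs_nonneg (Y ω)) (2:ℝ))
      exact mul_le_mul_of_nonneg_left this (by positivity))
    ((integrable_abs_rpow_mul_sq hq hW hY).const_mul _)
    (Filter.Eventually.of_forall fun ω => by
      intro t ht
      have hinner : HasDerivAt (fun t : ℝ => X ω + t * Y ω) (Y ω) t :=
        (hasDerivAt_mul_const (Y ω)).const_add (X ω)
      have houter := hasDerivAt_sp ha1 (X ω + t * Y ω)
      have hcomp := houter.comp t hinner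
      have hmul := hcomp.const_mul (q * Y ω)
      simp only [Function.comp] at hmul
      have heqf : (fun y : ℝ => q * Y ω * sp (q - 1) (X ω + y * Y ω))
          = fun t : ℝ => q * (sp (q - 1) (X ω + t * Y ω) * Y ω) := by
        funext t; ring
      rw [heqf] at hmul
      have hval : q * Y ω * ((q - 1) * |X ω + t * Y ω| ^ (q - 1 - 1) * Y ω)
          = q * (q - 1) * (|X ω + t * Y ω| ^ (q - 2) * |Y ω| ^ (2:ℝ)) := by
        rw [abs_rpow_two, show q - 1 - 1 = q - 2 by ring]
        ring
      rw [hval] at hmul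
      exact hmul)
  exact key.2

end MeasureB

section MeasureC

variable {Ω : Type*} {m0 : MeasurableSpace Ω} {μ : MeasureTheory.Measure Ω}
  [MeasureTheory.IsProbabilityMeasure μ]

lemma integral_abs_rpow_pos {q : ℝ} (hq0 : 0 < q) {f : Ω → ℝ}
    (hf : MemLp f (ENNReal.ofReal q) μ) (hfz : ¬ f =ᵐ[μ] 0) :
    0 < ∫ ω, |f ω| ^ q ∂μ := by
  have hnn : 0 ≤ ∫ ω, |f ω| ^ q ∂μ :=
    integral_nonneg fun ω => Real.rpow_nonneg (abs_nonneg _) q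
  rcases lt_or_eq_of_le hnn with h | h
  · exact h
  exfalso
  have hint : Integrable (fun ω => |f ω| ^ q) μ := integrable_abs_rpow hq0 hf
  have hz := (integral_eq_zero_iff_of_nonneg
    (fun ω => Real.rpow_nonneg (abs_nonneg _) q) hint).1 h.symm
  apply hfz
  filter_upwards [hz] with ω hω
  simp only [Pi.zero_apply] at hω ⊢
  have habs : |f ω| = 0 := by
    by_contra hne
    have hpos : 0 < |f ω| := lt_of_le_of_ne (abs_nonneg _) (Ne.symm hne)
    exact (ne_of_gt (Real.rpow_pos_of_pos hpos q)) hω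
  exact abs_eq_zero.1 habs

lemma holder_q {q : ℝ} (hq : 2 < q) {Z Y : Ω → ℝ}
    (hZ : MemLp Z (ENNReal.ofReal q) μ) (hY : MemLp Y (ENNReal.ofReal q) μ) :
    ∫ ω, |Z ω| ^ (q - 2) * |Y ω| ^ (2:ℝ) ∂μ ≤
      (∫ ω, |Z ω| ^ q ∂μ) ^ ((q - 2)/q) * (∫ ω, |Y ω| ^ q ∂μ) ^ ((2:ℝ)/q) := by
  have hq0 : (0:ℝ) < q := by linarith
  have hq2 : (0:ℝ) < q - 2 := by linarith
  have hpq : Real.HolderConjugate (q/(q-2)) (q/2) := by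
    rw [Real.holderConjugate_iff]
    constructor
    · rw [lt_div_iff₀ hq2]; linarith
    · field_simp
      ring
  have h1 : MemLp (fun ω => |Z ω| ^ (q - 2)) (ENNReal.ofReal (q/(q-2))) μ := by
    have h := hZ.norm_rpow_div (ENNReal.ofReal (q-2))
    rw [ENNReal.toReal_ofReal hq2.le, ← ENNReal.ofReal_div_of_pos hq2] at h
    exact h
  have h2 : MemLp (fun ω => |Y ω| ^ (2:ℝ)) (ENNReal.ofReal (q/2)) μ := by
    have h := hY.norm_rpow_div (ENNReal.ofReal 2)
    rw [ENNReal.toReal_ofReal (by norm_num : (0:ℝ) ≤ 2),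
      ← ENNReal.ofReal_div_of_pos (by norm_num : (0:ℝ) < 2)] at h
    exact h
  have key := integral_mul_le_Lp_mul_Lq_of_nonneg hpq
    (Filter.Eventually.of_forall fun ω => Real.rpow_nonneg (abs_nonneg (Z ω)) _)
    (Filter.Eventually.of_forall fun ω => Real.rpow_nonneg (abs_nonneg (Y ω)) _)
    h1 h2
  have e1 : (fun ω => (|Z ω| ^ (q - 2)) ^ (q/(q-2))) = fun ω => |Z ω| ^ q := by
    funext ω
    rw [← Real.rpow_mul (abs_nonneg _)]
    congr 1
    field_simp
  have e2 : (fun ω => (|Y ω| ^ (2:ℝ)) ^ (q/2)) = fun ω => |Y ω| ^ q := by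
    funext ω
    rw [← Real.rpow_mul (abs_nonneg _)]
    congr 1
    field_simp
  rw [e1, e2] at key
  rw [one_div_div, one_div_div] at key
  exact key

lemma step_B {m : MeasurableSpace Ω} (hm : m ≤ m0) {q : ℝ} (hq : 2 ≤ q) {X Y : Ω → ℝ}
    (hXm : StronglyMeasurable[m] X) (hX : MemLp X (ENNReal.ofReal q) μ)
    (hY : MemLp Y (ENNReal.ofReal q) μ) (hY0 : μ[Y|m] =ᵐ[μ] 0) :
    (∫ ω, |X ω + Y ω| ^ q ∂μ) ^ ((2:ℝ)/q) ≤
      (∫ ω, |X ω| ^ q ∂μ) ^ ((2:ℝ)/q) + (q - 1) * (∫ ω, |Y ω| ^ q ∂μ) ^ ((2:ℝ)/q) := by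
  have hq1 : (1:ℝ) < q := by linarith
  have hq0 : (0:ℝ) < q := by linarith
  have hIYnn : (0:ℝ) ≤ ∫ ω, |Y ω| ^ q ∂μ :=
    integral_nonneg fun ω => Real.rpow_nonneg (abs_nonneg _) q
  have hIXnn : (0:ℝ) ≤ ∫ ω, |X ω| ^ q ∂μ :=
    integral_nonneg fun ω => Real.rpow_nonneg (abs_nonneg _) q
  have hBnn : (0:ℝ) ≤ (∫ ω, |Y ω| ^ q ∂μ) ^ ((2:ℝ)/q) := Real.rpow_nonneg hIYnn _
  by_cases hYz : Y =ᵐ[μ] 0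
  · have hcongr : (fun ω => |X ω + Y ω| ^ q) =ᵐ[μ] (fun ω => |X ω| ^ q) := by
      filter_upwards [hYz] with ω h
      rw [Pi.zero_apply] at h
      rw [h, add_zero]
    rw [integral_congr_ae hcongr]
    have : 0 ≤ (q - 1) * (∫ ω, |Y ω| ^ q ∂μ) ^ ((2:ℝ)/q) :=
      mul_nonneg (by linarith) hBnn
    linarith
  by_cases hXz : X =ᵐ[μ] 0
  · have hcongr : (fun ω => |X ω + Y ω| ^ q) =ᵐ[μ] (fun ω => |Y ω| ^ q) := by
      filter_upwards [hXz] with ω h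
      rw [Pi.zero_apply] at h
      rw [h, zero_add]
    have hX0 : (fun ω => |X ω| ^ q) =ᵐ[μ] (fun _ => (0:ℝ)) := by
      filter_upwards [hXz] with ω h
      rw [Pi.zero_apply] at h
      rw [h, abs_zero, Real.zero_rpow hq0.ne']
    rw [integral_congr_ae hcongr, integral_congr_ae hX0, integral_zero,
      Real.zero_rpow (div_pos two_pos hq0).ne']
    have h1 : 1 * (∫ ω, |Y ω| ^ q ∂μ) ^ ((2:ℝ)/q)
        ≤ (q - 1) * (∫ ω, |Y ω| ^ q ∂μ) ^ ((2:ℝ)/q) :=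
      mul_le_mul_of_nonneg_right (by linarith) hBnn
    linarith
  -- main case
  have hXpos : 0 < ∫ ω, |X ω| ^ q ∂μ := integral_abs_rpow_pos hq0 hX hXz
  have hYpos : 0 < ∫ ω, |Y ω| ^ q ∂μ := integral_abs_rpow_pos hq0 hY hYz
  set g : ℝ → ℝ := fun t => ∫ ω, |X ω + t * Y ω| ^ q ∂μ with hgdef
  set g1 : ℝ → ℝ := fun t => ∫ ω, q * (sp (q - 1) (X ω + t * Y ω) * Y ω) ∂μ with hg1def
  set g2 : ℝ → ℝ :=
    fun t => ∫ ω, q * (q - 1) * (|X ω + t * Y ω| ^ (q - 2) * |Y ω| ^ (2:ℝ)) ∂μ with hg2def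
  have hg : ∀ t, HasDerivAt g (g1 t) t := fun t => deriv_g hq hX hY t
  have hg1 : ∀ t, HasDerivAt g1 (g2 t) t := fun t => deriv_g1 hq hX hY t
  have hgpos : ∀ t, 0 < g t := by
    intro t
    have hnn : 0 ≤ g t := integral_nonneg fun ω => Real.rpow_nonneg (abs_nonneg _) q
    rcases lt_or_eq_of_le hnn with h | h
    · exact h
    exfalso
    have hZint : Integrable (fun ω => |X ω + t * Y ω| ^ q) μ :=
      integrable_abs_rpow hq0 (hX.add (hY.const_mul t))
    have hz := (integral_eq_zero_iff_of_nonneg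
      (fun ω => Real.rpow_nonneg (abs_nonneg _) q) hZint).1 h.symm
    have hZ0 : (fun ω => X ω + t * Y ω) =ᵐ[μ] 0 := by
      filter_upwards [hz] with ω hω
      simp only [Pi.zero_apply] at hω ⊢
      have habs : |X ω + t * Y ω| = 0 := by
        by_contra hne
        have hpos : 0 < |X ω + t * Y ω| := lt_of_le_of_ne (abs_nonneg _) (Ne.symm hne)
        exact (ne_of_gt (Real.rpow_pos_of_pos hpos q)) hω
      exact abs_eq_zero.1 habs
    rcases eq_or_ne t 0 with rfl | htne
    · apply hXz
      filter_upwards [hZ0] with ω hω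
      simpa using hω
    · have hYX : Y =ᵐ[μ] fun ω => (-t⁻¹) * X ω := by
        filter_upwards [hZ0] with ω hω
        simp only [Pi.zero_apply] at hω
        have hXr : X ω = -(t * Y ω) := by linarith
        rw [hXr]
        field_simp
      have hcond := condExp_congr_ae (m := m) (μ := μ) hYX
      haveI : MeasureTheory.IsFiniteMeasure (μ.trim hm) := isFiniteMeasure_trim hm
      have hsm : StronglyMeasurable[m] (fun ω => (-t⁻¹) * X ω) := hXm.const_mul _
      have hint : Integrable (fun ω => (-t⁻¹) * X ω) μ :=
        (memLp_one_le hq1.le hX).const_mul _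
      rw [condExp_of_stronglyMeasurable hm hsm hint] at hcond
      have hX0' : (fun ω => (-t⁻¹) * X ω) =ᵐ[μ] 0 := hcond.symm.trans hY0
      apply hXz
      filter_upwards [hX0'] with ω hω
      simp only [Pi.zero_apply] at hω ⊢
      have ht' : t⁻¹ ≠ 0 := inv_ne_zero htne
      have : (-t⁻¹) ≠ 0 := neg_ne_zero.2 ht'
      exact (mul_eq_zero.1 hω).resolve_left this
  set B : ℝ := (∫ ω, |Y ω| ^ q ∂μ) ^ ((2:ℝ)/q) with hBdef
  have hg2le : ∀ t, g2 t ≤ q * (q - 1) * ((g t) ^ ((q-2)/q) * B) := by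
    intro t
    rcases eq_or_lt_of_le hq with h2 | h2
    · -- q = 2
      have hL : (fun ω => q * (q - 1) * (|X ω + t * Y ω| ^ (q - 2) * |Y ω| ^ (2:ℝ)))
          = fun ω => q * (q - 1) * |Y ω| ^ (2:ℝ) := by
        funext ω
        rw [show q - 2 = 0 by linarith, Real.rpow_zero]
        ring
      have hR : (g t) ^ ((q-2)/q) = 1 := by
        rw [show (q-2)/q = 0 by rw [show q - 2 = 0 by linarith]; simp, Real.rpow_zero]
      have hB2 : B = ∫ ω, |Y ω| ^ q ∂μ := by
        rw [hBdef, show (2:ℝ)/q = 1 by rw [← h2]; norm_num, Real.rpow_one]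
      have hint2 : g2 t = q * (q - 1) * ∫ ω, |Y ω| ^ (2:ℝ) ∂μ := by
        rw [hg2def]
        simp only
        rw [hL, integral_const_mul]
      rw [hint2, hR, hB2]
      have : (fun ω => |Y ω| ^ (2:ℝ)) = fun ω => |Y ω| ^ q := by
        funext ω; rw [← h2]
      rw [this]
      have hrw : q * (q - 1) * (1 * ∫ ω, |Y ω| ^ q ∂μ) = q * (q - 1) * ∫ ω, |Y ω| ^ q ∂μ := by
        ring
      rw [hrw]
    · -- 2 < q
      have hhold := holder_q h2 (hX.add (hY.const_mul t)) hY
      have hint2 : g2 t = q * (q - 1)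
          * ∫ ω, |X ω + t * Y ω| ^ (q - 2) * |Y ω| ^ (2:ℝ) ∂μ := by
        rw [hg2def]
        simp only
        rw [integral_const_mul]
      rw [hint2]
      have := mul_le_mul_of_nonneg_left hhold (by nlinarith : (0:ℝ) ≤ q * (q - 1))
      exact this
  set h : ℝ → ℝ := fun t => (g t) ^ ((2:ℝ)/q) with hhdef
  set h1 : ℝ → ℝ := fun t => g1 t * ((2:ℝ)/q) * (g t) ^ ((2:ℝ)/q - 1) with hh1def
  have hh : ∀ t, HasDerivAt h (h1 t) t := fun t =>
    (hg t).rpow_const (Or.inl (hgpos t).ne')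
  have hh1 : ∀ t, HasDerivAt h1
      (g2 t * ((2:ℝ)/q) * (g t) ^ ((2:ℝ)/q - 1)
        + (g1 t * ((2:ℝ)/q)) * (g1 t * ((2:ℝ)/q - 1) * (g t) ^ ((2:ℝ)/q - 1 - 1))) t := by
    intro t
    exact ((hg1 t).mul_const ((2:ℝ)/q)).mul ((hg t).rpow_const (Or.inl (hgpos t).ne'))
  have hDle : ∀ t, g2 t * ((2:ℝ)/q) * (g t) ^ ((2:ℝ)/q - 1)
      + (g1 t * ((2:ℝ)/q)) * (g1 t * ((2:ℝ)/q - 1) * (g t) ^ ((2:ℝ)/q - 1 - 1))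
      ≤ 2 * (q - 1) * B := by
    intro t
    have hgt := hgpos t
    have hfirst : g2 t * ((2:ℝ)/q) * (g t) ^ ((2:ℝ)/q - 1) ≤ 2 * (q - 1) * B := by
      have hmul : g2 t * ((2:ℝ)/q) * (g t) ^ ((2:ℝ)/q - 1)
          ≤ q * (q - 1) * ((g t) ^ ((q-2)/q) * B) * (((2:ℝ)/q) * (g t) ^ ((2:ℝ)/q - 1)) := by
        have hfac : (0:ℝ) ≤ ((2:ℝ)/q) * (g t) ^ ((2:ℝ)/q - 1) := by
          apply mul_nonneg (by positivity)
          exact (Real.rpow_pos_of_pos hgt _).le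
        calc g2 t * ((2:ℝ)/q) * (g t) ^ ((2:ℝ)/q - 1)
            = g2 t * (((2:ℝ)/q) * (g t) ^ ((2:ℝ)/q - 1)) := by ring
          _ ≤ q * (q - 1) * ((g t) ^ ((q-2)/q) * B) * (((2:ℝ)/q) * (g t) ^ ((2:ℝ)/q - 1)) :=
            mul_le_mul_of_nonneg_right (hg2le t) hfac
      have hexp : (g t) ^ ((q-2)/q) * (g t) ^ ((2:ℝ)/q - 1) = 1 := by
        rw [← Real.rpow_add hgt]
        have : (q-2)/q + ((2:ℝ)/q - 1) = 0 := by field_simp; ring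
        rw [this, Real.rpow_zero]
      calc g2 t * ((2:ℝ)/q) * (g t) ^ ((2:ℝ)/q - 1)
          ≤ q * (q - 1) * ((g t) ^ ((q-2)/q) * B) * (((2:ℝ)/q) * (g t) ^ ((2:ℝ)/q - 1)) := hmul
        _ = 2 * (q - 1) * B * ((g t) ^ ((q-2)/q) * (g t) ^ ((2:ℝ)/q - 1)) := by
            field_simp
        _ = 2 * (q - 1) * B := by rw [hexp, mul_one]
    have hsecond : (g1 t * ((2:ℝ)/q)) * (g1 t * ((2:ℝ)/q - 1) * (g t) ^ ((2:ℝ)/q - 1 - 1))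
        ≤ 0 := by
      have hre : (g1 t * ((2:ℝ)/q)) * (g1 t * ((2:ℝ)/q - 1) * (g t) ^ ((2:ℝ)/q - 1 - 1))
          = (g1 t * g1 t) * (((2:ℝ)/q) * (((2:ℝ)/q - 1) * (g t) ^ ((2:ℝ)/q - 1 - 1))) := by
        ring
      rw [hre]
      apply mul_nonpos_of_nonneg_of_nonpos (mul_self_nonneg _)
      apply mul_nonpos_of_nonneg_of_nonpos (by positivity)
      apply mul_nonpos_of_nonpos_of_nonneg
      · have : (2:ℝ)/q ≤ 1 := by
          rw [div_le_one hq0]; linarith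
        linarith
      · exact (Real.rpow_pos_of_pos hgt _).le
    linarith
  have hg10 : g1 0 = 0 := by
    have he : (fun ω => q * (sp (q - 1) (X ω + 0 * Y ω) * Y ω))
        = fun ω => q * (sp (q - 1) (X ω) * Y ω) := by
      funext ω; norm_num
    rw [hg1def]
    simp only
    rw [he, integral_const_mul, orth hm hq1 hXm hX hY hY0, mul_zero]
  have hh10 : h1 0 = 0 := by
    rw [hh1def]
    simp only
    rw [hg10, zero_mul, zero_mul]
  -- u antitone
  set u : ℝ → ℝ := fun t => h1 t - 2 * (q - 1) * B * t with hudef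
  have hu : ∀ t, HasDerivAt u
      (g2 t * ((2:ℝ)/q) * (g t) ^ ((2:ℝ)/q - 1)
        + (g1 t * ((2:ℝ)/q)) * (g1 t * ((2:ℝ)/q - 1) * (g t) ^ ((2:ℝ)/q - 1 - 1))
        - 2 * (q - 1) * B) t := by
    intro t
    have hlin : HasDerivAt (fun t : ℝ => 2 * (q - 1) * B * t) (2 * (q - 1) * B) t := by
      simpa using (hasDerivAt_id t).const_mul (2 * (q - 1) * B)
    exact (hh1 t).sub hlin
  have huant : Antitone u := by
    apply antitone_of_deriv_nonpos
    · exact fun t => (hu t).differentiableAt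
    · intro t
      rw [(hu t).deriv]
      have := hDle t
      linarith
  have hu_le : ∀ t, 0 ≤ t → h1 t ≤ 2 * (q - 1) * B * t := by
    intro t ht
    have h1' := huant ht
    rw [hudef] at h1'
    simp only at h1'
    rw [hh10] at h1'
    -- h1' : h1 t - 2*(q-1)*B*t ≤ 0 - 2*(q-1)*B*0
    have : h1 t - 2 * (q - 1) * B * t ≤ 0 - 2 * (q - 1) * B * 0 := h1'
    linarith [this]
  -- v antitone on Ici 0
  set v : ℝ → ℝ := fun t => h t - (q - 1) * B * (t * t) with hvdef
  have hv : ∀ t, HasDerivAt v (h1 t - (q - 1) * B * (1 * t + t * 1)) t := by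
    intro t
    have hsq : HasDerivAt (fun t : ℝ => t * t) (1 * t + t * 1) t :=
      (hasDerivAt_id t).mul (hasDerivAt_id t)
    exact (hh t).sub (hsq.const_mul _)
  have hvant : AntitoneOn v (Set.Ici (0:ℝ)) := by
    apply antitoneOn_of_deriv_nonpos (convex_Ici 0)
    · exact (Differentiable.continuous fun t => (hv t).differentiableAt).continuousOn
    · intro t ht
      exact ((hv t).differentiableAt).differentiableWithinAt
    · intro t ht
      rw [interior_Ici] at ht
      rw [(hv t).deriv]
      have hle := hu_le t (le_of_lt ht)
      have heq : 2 * (q - 1) * B * t = (q - 1) * B * (1 * t + t * 1) := by ring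
      linarith
  have hfin := hvant (Set.self_mem_Ici) (Set.mem_Ici.2 zero_le_one) zero_le_one
  rw [hvdef] at hfin
  simp only at hfin
  -- hfin : h 1 - (q-1)*B*(1*1) ≤ h 0 - (q-1)*B*(0*0)
  have hg1v : g 1 = ∫ ω, |X ω + Y ω| ^ q ∂μ := by
    rw [hgdef]
    simp only
    congr 1
    funext ω
    rw [one_mul]
  have hg0v : g 0 = ∫ ω, |X ω| ^ q ∂μ := by
    rw [hgdef]
    simp only
    congr 1
    funext ω
    rw [zero_mul, add_zero]
  have hh1v : h 1 = (∫ ω, |X ω + Y ω| ^ q ∂μ) ^ ((2:ℝ)/q) := by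
    rw [hhdef]; simp only; rw [hg1v]
  have hh0v : h 0 = (∫ ω, |X ω| ^ q ∂μ) ^ ((2:ℝ)/q) := by
    rw [hhdef]; simp only; rw [hg0v]
  rw [hh1v, hh0v] at hfin
  have hBval : B = (∫ ω, |Y ω| ^ q ∂μ) ^ ((2:ℝ)/q) := hBdef
  nlinarith [hfin]

end MeasureC

/-- Burkholder's inequality with explicit constant `K_q = max((q-1)⁻¹, √(q-1))`. -/
theorem burkholder_inequality
    {Ω : Type*} {m0 : MeasurableSpace Ω} (μ : Measure Ω) [IsProbabilityMeasure μ]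
    (T : ℕ) (ℱ : ℕ → MeasurableSpace Ω) (hmono : Monotone ℱ) (hle : ∀ t, ℱ t ≤ m0)
    (q : ℝ) (hq : 1 < q)
    (ξ : ℕ → Ω → ℝ)
    (hmeas : ∀ t ∈ Finset.Icc 1 T, StronglyMeasurable[ℱ t] (ξ t))
    (hLq : ∀ t ∈ Finset.Icc 1 T, MemLp (ξ t) (ENNReal.ofReal q) μ)
    (hmds : ∀ t ∈ Finset.Icc 1 T, μ[ξ t | ℱ (t - 1)] =ᵐ[μ] 0)
    (q' Kq : ℝ) (hq' : q' = min q 2) (hKq : Kq = max (q - 1)⁻¹ (Real.sqrt (q - 1))) :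
    ((∫ ω, |∑ t ∈ Finset.Icc 1 T, ξ t ω| ^ q ∂μ) ^ (1 / q)) ^ q' ≤
      Kq ^ q' * ∑ t ∈ Finset.Icc 1 T, ((∫ ω, |ξ t ω| ^ q ∂μ) ^ (1 / q)) ^ q' := by
  have hq0 : (0:ℝ) < q := by linarith
  have hq10 : (0:ℝ) < q - 1 := by linarith
  -- notation
  set S : ℕ → Ω → ℝ := fun n ω => ∑ t ∈ Finset.Icc 1 n, ξ t ω with hSdef
  have hsubset : ∀ {n : ℕ}, n ≤ T → Finset.Icc 1 n ⊆ Finset.Icc 1 T := by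
    intro n hn
    exact Finset.Icc_subset_Icc_right hn
  have hSmeas : ∀ n, n ≤ T → StronglyMeasurable[ℱ n] (S n) := by
    intro n hn
    apply Finset.stronglyMeasurable_fun_sum
    intro t ht
    have ht' := Finset.mem_Icc.1 ht
    exact (hmeas t (hsubset hn ht)).mono (hmono ht'.2)
  have hSLp : ∀ n, n ≤ T → MemLp (S n) (ENNReal.ofReal q) μ := by
    intro n hn
    exact memLp_finset_sum _ (fun t ht => hLq t (hsubset hn ht))
  have hInn : ∀ (f : Ω → ℝ), (0:ℝ) ≤ ∫ ω, |f ω| ^ q ∂μ := fun f =>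
    integral_nonneg fun ω => Real.rpow_nonneg (abs_nonneg _) q
  have hS0 : ∫ ω, |S 0 ω| ^ q ∂μ = 0 := by
    have : (fun ω => |S 0 ω| ^ q) = fun _ => (0:ℝ) := by
      funext ω
      rw [hSdef]
      simp [Real.zero_rpow hq0.ne']
    rw [this, integral_zero]
  have hmds' : ∀ n, n + 1 ≤ T → μ[ξ (n+1) | ℱ n] =ᵐ[μ] 0 := by
    intro n hn
    have h := hmds (n+1) (Finset.mem_Icc.2 ⟨Nat.le_add_left 1 n, hn⟩)
    simpa using h
  rcases le_or_gt 2 q with h2q | h2q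
  · -- case q ≥ 2
    have hstep : ∀ n, n + 1 ≤ T →
        (∫ ω, |S (n+1) ω| ^ q ∂μ) ^ ((2:ℝ)/q) ≤
          (∫ ω, |S n ω| ^ q ∂μ) ^ ((2:ℝ)/q)
            + (q - 1) * (∫ ω, |ξ (n+1) ω| ^ q ∂μ) ^ ((2:ℝ)/q) := by
      intro n hn
      have hsum : (fun ω => S (n+1) ω) = fun ω => S n ω + ξ (n+1) ω := by
        funext ω
        rw [hSdef]
        exact Finset.sum_Icc_succ_top (Nat.le_add_left 1 n) _
      have key := step_B (hle n) h2q (hSmeas n (le_trans (Nat.le_succ n) hn))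
        (hSLp n (le_trans (Nat.le_succ n) hn))
        (hLq (n+1) (Finset.mem_Icc.2 ⟨Nat.le_add_left 1 n, hn⟩)) (hmds' n hn)
      have hre : (∫ ω, |S (n+1) ω| ^ q ∂μ) = ∫ ω, |S n ω + ξ (n+1) ω| ^ q ∂μ := by
        congr 1
        funext ω
        rw [congrFun hsum ω]
      rw [hre]
      exact key
    have hind : ∀ n, n ≤ T →
        (∫ ω, |S n ω| ^ q ∂μ) ^ ((2:ℝ)/q) ≤
          (q - 1) * ∑ t ∈ Finset.Icc 1 n, (∫ ω, |ξ t ω| ^ q ∂μ) ^ ((2:ℝ)/q) := by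
      intro n
      induction n with
      | zero =>
        intro _
        rw [hS0, Real.zero_rpow (div_pos two_pos hq0).ne']
        simp
      | succ n ih =>
        intro hn
        have hn' : n ≤ T := le_trans (Nat.le_succ n) hn
        have h1 := hstep n hn
        have h2 := ih hn'
        rw [Finset.sum_Icc_succ_top (Nat.le_add_left 1 n), mul_add]
        linarith
    -- assemble
    have hmin : min q 2 = 2 := min_eq_right h2q
    have hmax : Kq = Real.sqrt (q - 1) := by
      rw [hKq, max_eq_right]
      calc (q - 1)⁻¹ ≤ 1 := by
            rw [inv_le_one_iff₀]
            right
            linarith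
        _ ≤ Real.sqrt (q - 1) := Real.one_le_sqrt.2 (by linarith)
    subst hq'
    rw [hmin, hmax]
    have hKsq : Real.sqrt (q - 1) ^ (2:ℝ) = q - 1 := by
      rw [show (2:ℝ) = ((2:ℕ):ℝ) by norm_num, Real.rpow_natCast, sq_sqrt (by linarith)]
    rw [hKsq]
    have hL : ((∫ ω, |S T ω| ^ q ∂μ) ^ (1/q)) ^ (2:ℝ)
        = (∫ ω, |S T ω| ^ q ∂μ) ^ ((2:ℝ)/q) := by
      rw [← Real.rpow_mul (hInn (S T))]
      congr 1
      field_simp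
    have hR : ∀ t, ((∫ ω, |ξ t ω| ^ q ∂μ) ^ (1/q)) ^ (2:ℝ)
        = (∫ ω, |ξ t ω| ^ q ∂μ) ^ ((2:ℝ)/q) := by
      intro t
      rw [← Real.rpow_mul (hInn (ξ t))]
      congr 1
      field_simp
    calc ((∫ ω, |S T ω| ^ q ∂μ) ^ (1/q)) ^ (2:ℝ)
        = (∫ ω, |S T ω| ^ q ∂μ) ^ ((2:ℝ)/q) := hL
      _ ≤ (q - 1) * ∑ t ∈ Finset.Icc 1 T, (∫ ω, |ξ t ω| ^ q ∂μ) ^ ((2:ℝ)/q) :=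
          hind T le_rfl
      _ = (q - 1) * ∑ t ∈ Finset.Icc 1 T, ((∫ ω, |ξ t ω| ^ q ∂μ) ^ (1/q)) ^ (2:ℝ) := by
          congr 1
          exact (Finset.sum_congr rfl fun t _ => (hR t).symm)
  · -- case q < 2
    have hstep : ∀ n, n + 1 ≤ T →
        ∫ ω, |S (n+1) ω| ^ q ∂μ ≤
          (∫ ω, |S n ω| ^ q ∂μ) + 2 ^ (2 - q) * ∫ ω, |ξ (n+1) ω| ^ q ∂μ := by
      intro n hn
      have hsum : (fun ω => S (n+1) ω) = fun ω => S n ω + ξ (n+1) ω := by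
        funext ω
        rw [hSdef]
        exact Finset.sum_Icc_succ_top (Nat.le_add_left 1 n) _
      have key := step_A (hle n) hq h2q.le (hSmeas n (le_trans (Nat.le_succ n) hn))
        (hSLp n (le_trans (Nat.le_succ n) hn))
        (hLq (n+1) (Finset.mem_Icc.2 ⟨Nat.le_add_left 1 n, hn⟩)) (hmds' n hn)
      have hre : (∫ ω, |S (n+1) ω| ^ q ∂μ) = ∫ ω, |S n ω + ξ (n+1) ω| ^ q ∂μ := by
        congr 1
        funext ω
        rw [congrFun hsum ω]
      rw [hre]
      exact key
    have hind : ∀ n, n ≤ T →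
        ∫ ω, |S n ω| ^ q ∂μ ≤
          2 ^ (2 - q) * ∑ t ∈ Finset.Icc 1 n, ∫ ω, |ξ t ω| ^ q ∂μ := by
      intro n
      induction n with
      | zero =>
        intro _
        rw [hS0]
        simp
      | succ n ih =>
        intro hn
        have hn' : n ≤ T := le_trans (Nat.le_succ n) hn
        have h1 := hstep n hn
        have h2 := ih hn'
        rw [Finset.sum_Icc_succ_top (Nat.le_add_left 1 n), mul_add]
        linarith
    have hmin : min q 2 = q := min_eq_left h2q.le
    have hmax : Kq = (q - 1)⁻¹ := by
      rw [hKq, max_eq_left]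
      calc Real.sqrt (q - 1) ≤ 1 := Real.sqrt_le_one.2 (by linarith)
        _ ≤ (q - 1)⁻¹ := by
            rw [← one_div, le_div_iff₀ hq10, one_mul]
            linarith
    subst hq'
    rw [hmin, hmax]
    have hKq' : ((q - 1)⁻¹) ^ q = (q - 1) ^ (-q) := by
      rw [Real.inv_rpow hq10.le q]
      exact (Real.rpow_neg hq10.le q).symm
    have hL : ((∫ ω, |S T ω| ^ q ∂μ) ^ (1/q)) ^ q = ∫ ω, |S T ω| ^ q ∂μ := by
      rw [← Real.rpow_mul (hInn (S T)), show 1/q*q = 1 by field_simp, Real.rpow_one]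
    have hR : ∀ t, ((∫ ω, |ξ t ω| ^ q ∂μ) ^ (1/q)) ^ q = ∫ ω, |ξ t ω| ^ q ∂μ := by
      intro t
      rw [← Real.rpow_mul (hInn (ξ t)), show 1/q*q = 1 by field_simp, Real.rpow_one]
    have hsum_eq : ∑ t ∈ Finset.Icc 1 T, ((∫ ω, |ξ t ω| ^ q ∂μ) ^ (1/q)) ^ q
        = ∑ t ∈ Finset.Icc 1 T, ∫ ω, |ξ t ω| ^ q ∂μ :=
      Finset.sum_congr rfl fun t _ => hR t
    rw [hL, hKq', hsum_eq]
    have hsum_nn : (0:ℝ) ≤ ∑ t ∈ Finset.Icc 1 T, ∫ ω, |ξ t ω| ^ q ∂μ :=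
      Finset.sum_nonneg fun t _ => hInn (ξ t)
    calc ∫ ω, |S T ω| ^ q ∂μ
        ≤ 2 ^ (2 - q) * ∑ t ∈ Finset.Icc 1 T, ∫ ω, |ξ t ω| ^ q ∂μ := hind T le_rfl
      _ ≤ (q - 1) ^ (-q) * ∑ t ∈ Finset.Icc 1 T, ∫ ω, |ξ t ω| ^ q ∂μ :=
          mul_le_mul_of_nonneg_right (const_cmp hq h2q.le) hsum_nn
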